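/- Let E and F be finitary extensive categories with finite limits and finite coproducts, and let f_! ⊣ f^* ⊣ f_* be an adjoint triple with f^* : E ⥤ F preserving finite limits and finite coproducts (for example, the adjoint triple of an essential geometric morphism between elementary toposes). Let B be an object of E with a binary coproduct decomposition B ≅ A ⨿ A', and let a : A ⟶ B be the corresponding coprojection. Then for every object X of F and every morphism x : X ⟶ f^*(B), the comparison map θ_{X,a,x} : f_!(X ×_{f^*(B)} f^*(A)) ⟶ f_!(X) ×_B A is an isomorphism. -/

import Mathlib

open CategoryTheory CategoryTheory.Limits

/-- A subobject classifier for a category `C` with a terminal object: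
an object `Ω` together with a "truth" arrow `⊤_ C ⟶ Ω` such that every
monomorphism arises as the pullback of `truth` along a unique classifying map. -/
structure Classifier (C : Type*) [Category C] [HasTerminal C] where
  Ω : C
  truth : ⊤_ C ⟶ Ω
  χ : ∀ {U A : C} (m : U ⟶ A) [Mono m], A ⟶ Ω
  isPullback : ∀ {U A : C} (m : U ⟶ A) [Mono m],
    IsPullback m (terminal.from U) (χ m) truth
  uniq : ∀ {U A : C} (m : U ⟶ A) [Mono m] (χ' : A ⟶ Ω),
    IsPullback m (terminal.from U) χ' truth → χ' = χ m

/-- `C` has a subobject classifier. -/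
class HasClassifier (C : Type*) [Category C] [HasTerminal C] : Prop where
  nonempty : Nonempty (_root_.Classifier C)

/-- Given an adjunction `fShriek ⊣ fStar` (thought of as `f_! ⊣ f^*` for an essential
geometric morphism `f`), a morphism `a : A ⟶ B` in the codomain, an object `X` of the
domain and a morphism `x : X ⟶ f^* B`, this is the comparison map
`θ : f_!(X ×_{f^* B} f^* A) ⟶ f_!(X) ×_B A`, whose first component is `f_!` of the first
pullback projection, and whose second component is `f_!` of the second pullback projection
followed by the counit `f_!(f^* A) ⟶ A`.  Here `f_!(X) ⟶ B` is the adjunct of `x`.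
The geometric morphism `f` is locally connected precisely if all these maps are
isomorphisms. -/
noncomputable def thetaMap {F : Type*} {E : Type*} [Category F] [Category E]
    [HasPullbacks E] [HasPullbacks F]
    (fShriek : F ⥤ E) (fStar : E ⥤ F) (adj : fShriek ⊣ fStar)
    {A B : E} (a : A ⟶ B) (X : F) (x : X ⟶ fStar.obj B) :
    fShriek.obj (pullback x (fStar.map a)) ⟶ pullback ((adj.homEquiv X B).symm x) a :=
  pullback.lift (fShriek.map (pullback.fst x (fStar.map a)))
    (fShriek.map (pullback.snd x (fStar.map a)) ≫ adj.counit.app A)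
    (by
      have h := adj.counit.naturality a
      simp only [Functor.comp_map, Functor.id_map] at h
      rw [Adjunction.homEquiv_counit, ← Functor.map_comp_assoc, pullback.condition,
        Functor.map_comp_assoc, Category.assoc, ← h])

universe v₁ v₂ u₁ u₂

/-- Let `E` and `F` be finitary extensive categories with finite limits
(and finite coproducts), and let `f_! ⊣ f^* ⊣ f_*` be an adjoint triple with
`f^* : E ⥤ F` preserving finite limits and finite coproducts.  If `B` is the coproduct
of `A` and `A'`, with coprojection `a : A ⟶ B`, then for every object `X` of `F` and
every `x : X ⟶ f^* B`, the comparison map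
`θ : f_!(X ×_{f^* B} f^* A) ⟶ f_!(X) ×_B A` is an isomorphism. -/
theorem theta_isIso_of_coproduct_inclusion
    {E : Type u₁} [Category.{v₁} E] [HasFiniteLimits E] [HasFiniteCoproducts E]
    [FinitaryExtensive E]
    {F : Type u₂} [Category.{v₂} F] [HasFiniteLimits F] [HasFiniteCoproducts F]
    [FinitaryExtensive F]
    (fShriek : F ⥤ E) (fStar : E ⥤ F) (fPush : F ⥤ E)
    [PreservesFiniteLimits fStar] [PreservesFiniteCoproducts fStar]
    (adj₁ : fShriek ⊣ fStar) (adj₂ : fStar ⊣ fPush)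
    {A A' B : E} (a : A ⟶ B) (a' : A' ⟶ B)
    (hB : Nonempty (IsColimit (BinaryCofan.mk a a')))
    (X : F) (x : X ⟶ fStar.obj B) :
    IsIso (thetaMap fShriek fStar adj₁ a X x) := by
  obtain ⟨hc⟩ := hB
  haveI : PreservesColimitsOfShape (Discrete WalkingPair) fStar :=
    inferInstance
  haveI : PreservesColimitsOfSize.{0,0} fShriek := adj₁.leftAdjoint_preservesColimits
  -- `f^*` preserves the coproduct decomposition of `B`
  have hcF : IsColimit (BinaryCofan.mk (fStar.map a) (fStar.map a')) :=
    mapIsColimitOfPreservesOfIsColimit fStar _ _ hc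
  -- pulling back along `x` gives a coproduct decomposition of `X`
  have hX : IsColimit (BinaryCofan.mk (pullback.fst x (fStar.map a))
      (pullback.fst x (fStar.map a'))) := by
    refine (((BinaryCofan.isVanKampen_iff _).mp (FinitaryExtensive.vanKampen _ hcF)
        (BinaryCofan.mk (pullback.fst x (fStar.map a))
        (pullback.fst x (fStar.map a')))
        (pullback.snd x (fStar.map a)) (pullback.snd x (fStar.map a')) x
        pullback.condition.symm pullback.condition.symm).mpr
      ⟨IsPullback.of_hasPullback _ _, IsPullback.of_hasPullback _ _⟩).some
  -- `f_!` preserves this coproduct decomposition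
  have hXE : IsColimit (BinaryCofan.mk (fShriek.map (pullback.fst x (fStar.map a)))
      (fShriek.map (pullback.fst x (fStar.map a')))) :=
    mapIsColimitOfPreservesOfIsColimit fShriek _ _ hX
  -- van Kampen in `E` along the cofan `(a, a')`
  have hcomm : ∀ {A₀ : E} (b : A₀ ⟶ B) (y : X ⟶ fStar.obj B),
      (fShriek.map (pullback.snd y (fStar.map b)) ≫ adj₁.counit.app A₀) ≫ b =
        (BinaryCofan.mk (fShriek.map (pullback.fst y (fStar.map b)))
          (fShriek.map (pullback.fst y (fStar.map b)))).inl ≫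
          (adj₁.homEquiv X B).symm y := by
    intro A₀ b y
    have h := adj₁.counit.naturality b
    simp only [Functor.comp_map, Functor.id_map] at h
    dsimp
    rw [Adjunction.homEquiv_counit, Category.assoc, ← h, ← Functor.map_comp_assoc,
      ← pullback.condition, Functor.map_comp, Category.assoc]
    rfl
  have key := (((BinaryCofan.isVanKampen_iff _).mp (FinitaryExtensive.vanKampen _ hc))
      (BinaryCofan.mk (fShriek.map (pullback.fst x (fStar.map a)))
        (fShriek.map (pullback.fst x (fStar.map a'))))
      (fShriek.map (pullback.snd x (fStar.map a)) ≫ adj₁.counit.app A)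
      (fShriek.map (pullback.snd x (fStar.map a')) ≫ adj₁.counit.app A')
      ((adj₁.homEquiv X B).symm x)
      (hcomm a x) (hcomm a' x)).mp ⟨hXE⟩
  have hPB : IsPullback (fShriek.map (pullback.fst x (fStar.map a)))
      (fShriek.map (pullback.snd x (fStar.map a)) ≫ adj₁.counit.app A)
      ((adj₁.homEquiv X B).symm x) a := key.1
  have : thetaMap fShriek fStar adj₁ a X x = hPB.isoPullback.hom := by
    apply pullback.hom_ext <;>
      simp [thetaMap]
    · exact pullback.lift_fst _ _ _
    · exact pullback.lift_snd _ _ _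
  rw [this]
  infer_instance
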